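/- The frequency amplitude features of ESTAG are E(3)-invariant: let T, N be positive integers, x : Fin T → Fin N → ℝ³ be node positions, w : Fin N → Fin T → ℝ be fixed per-node spectral weights, and define f_i(k) = Σ_{t=0}^{T-1} exp(-i' · 2πkt/T) • (x_i(t) - x̄(t)) ∈ ℂ³ and c_i(k) = w_i(k) · ‖f_i(k)‖². Then for every real orthogonal 3×3 matrix O and every b ∈ ℝ³, the quantity c_i(k) computed from the transformed positions t ↦ (i ↦ O · x_i(t) + b) equals c_i(k) computed from x, for all i and k. -/

import Mathlib

open scoped BigOperators Matrix

/-- Componentwise coercion of a real 3-vector into a complex 3-vector. -/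
noncomputable def complexify (v : EuclideanSpace ℝ (Fin 3)) : EuclideanSpace ℂ (Fin 3) :=
  WithLp.toLp 2 (fun a => (v a : ℂ))

/-- Mean position of the `N` nodes at frame `t`. -/
noncomputable def meanPos {T N : ℕ} (x : Fin T → Fin N → EuclideanSpace ℝ (Fin 3))
    (t : Fin T) : EuclideanSpace ℝ (Fin 3) :=
  (N : ℝ)⁻¹ • ∑ j : Fin N, x t j

/-- Equivariant Discrete Fourier Transform:
`f_i(k) = ∑_{t=0}^{T-1} exp(-i' · 2πkt/T) • (x_i(t) - x̄(t)) ∈ ℂ³`. -/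
noncomputable def edft {T N : ℕ} (x : Fin T → Fin N → EuclideanSpace ℝ (Fin 3))
    (i : Fin N) (k : Fin T) : EuclideanSpace ℂ (Fin 3) :=
  ∑ t : Fin T,
    Complex.exp (-Complex.I * (2 * (Real.pi : ℂ) * (k.val : ℂ) * (t.val : ℂ) / (T : ℂ))) •
      complexify (x t i - meanPos x t)

/-- The E(3) action `x ↦ O·x + b` on 3-vectors. -/
noncomputable def e3Act (O : Matrix (Fin 3) (Fin 3) ℝ) (b : EuclideanSpace ℝ (Fin 3))
    (v : EuclideanSpace ℝ (Fin 3)) : EuclideanSpace ℝ (Fin 3) :=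
  (show EuclideanSpace ℝ (Fin 3) from WithLp.toLp 2 (O.mulVec v)) + b

/-- Frequency cross-correlation `A_{ij}(k) = w_i(k) w_j(k) |⟨f_i(k), f_j(k)⟩|`. -/
noncomputable def crossCorr {T N : ℕ} (w : Fin N → Fin T → ℝ)
    (x : Fin T → Fin N → EuclideanSpace ℝ (Fin 3)) (i j : Fin N) (k : Fin T) : ℝ :=
  w i k * w j k * ‖(inner ℂ (edft x i k) (edft x j k) : ℂ)‖

/-- Frequency amplitude `c_i(k) = w_i(k) ‖f_i(k)‖²`. -/
noncomputable def amplitude {T N : ℕ} (w : Fin N → Fin T → ℝ)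
    (x : Fin T → Fin N → EuclideanSpace ℝ (Fin 3)) (i : Fin N) (k : Fin T) : ℝ :=
  w i k * ‖edft x i k‖ ^ 2

lemma meanPos_e3 {T N : ℕ} (hN : 0 < N) (x : Fin T → Fin N → EuclideanSpace ℝ (Fin 3))
    (O : Matrix (Fin 3) (Fin 3) ℝ) (b : EuclideanSpace ℝ (Fin 3)) (t : Fin T) :
    meanPos (fun t l => e3Act O b (x t l)) t
      = (show EuclideanSpace ℝ (Fin 3) from WithLp.toLp 2 (O.mulVec (meanPos x t))) + b := by
  simp only [meanPos, e3Act, Finset.sum_add_distrib, Finset.sum_const, Finset.card_univ,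
    Fintype.card_fin, smul_add]
  congr 1
  · rw [show WithLp.toLp 2 (O *ᵥ ((↑N : ℝ)⁻¹ • ∑ j, x t j).ofLp)
        = Matrix.toEuclideanLin O ((↑N : ℝ)⁻¹ • ∑ j, x t j) from rfl, map_smul, map_sum]
    rfl
  · rw [← Nat.cast_smul_eq_nsmul ℝ, smul_smul, inv_mul_cancel₀ (by positivity), one_smul]

lemma complexify_mulVec (O : Matrix (Fin 3) (Fin 3) ℝ) (v : EuclideanSpace ℝ (Fin 3)) :
    complexify (show EuclideanSpace ℝ (Fin 3) from WithLp.toLp 2 (O.mulVec v))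
      = (show EuclideanSpace ℂ (Fin 3) from
          WithLp.toLp 2 ((O.map Complex.ofReal).mulVec (complexify v))) := by
  ext a
  simp only [complexify, Matrix.mulVec, dotProduct, Matrix.map_apply, PiLp.toLp_apply]
  push_cast
  rfl

lemma edft_e3 {T N : ℕ} (hN : 0 < N) (x : Fin T → Fin N → EuclideanSpace ℝ (Fin 3))
    (O : Matrix (Fin 3) (Fin 3) ℝ) (b : EuclideanSpace ℝ (Fin 3)) (i : Fin N) (k : Fin T) :
    edft (fun t l => e3Act O b (x t l)) i k
      = (show EuclideanSpace ℂ (Fin 3) from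
          WithLp.toLp 2 ((O.map Complex.ofReal).mulVec (edft x i k))) := by
  have hdiff : ∀ t : Fin T,
      e3Act O b (x t i) - meanPos (fun t l => e3Act O b (x t l)) t
        = (show EuclideanSpace ℝ (Fin 3) from WithLp.toLp 2 (O.mulVec (WithLp.ofLp (x t i - meanPos x t)))) := by
    intro t
    rw [meanPos_e3 hN x O b t]
    show e3Act O b (x t i) - _ = (Matrix.toEuclideanLin O) (x t i - meanPos x t)
    rw [map_sub]
    simp only [e3Act, Matrix.toEuclideanLin_apply]
    abel
  unfold edft
  simp only [hdiff, complexify_mulVec]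
  show _ = (Matrix.toEuclideanLin (O.map Complex.ofReal)) _
  rw [map_sum]
  exact Finset.sum_congr rfl fun t _ => by rw [map_smul]; rfl

lemma norm_mulVec_orthogonal (O : Matrix (Fin 3) (Fin 3) ℝ)
    (hO : O ∈ Matrix.orthogonalGroup (Fin 3) ℝ) (g : EuclideanSpace ℂ (Fin 3)) :
    ‖(show EuclideanSpace ℂ (Fin 3) from WithLp.toLp 2 ((O.map Complex.ofReal).mulVec g))‖ = ‖g‖ := by
  set M := O.map (Complex.ofReal) with hM
  have hMU : Mᴴ * M = 1 := by
    have h1 : star O * O = 1 := (Matrix.mem_orthogonalGroup_iff' (Fin 3) ℝ).mp hO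
    have : Mᴴ = (star O).map Complex.ofReal := by
      ext a c
      simp [hM, Matrix.conjTranspose_apply, Matrix.map_apply, Matrix.star_apply,
        Complex.conj_ofReal, Matrix.transpose_apply]
    have hmm : (star O).map Complex.ofReal * O.map Complex.ofReal
        = (star O * O).map Complex.ofReal := by
      ext a c
      simp [Matrix.mul_apply, Matrix.map_apply]
    rw [this, hM, hmm, h1, Matrix.map_one Complex.ofReal rfl rfl]
  have hinner : (inner ℂ (show EuclideanSpace ℂ (Fin 3) from WithLp.toLp 2 (M.mulVec g))
      (show EuclideanSpace ℂ (Fin 3) from WithLp.toLp 2 (M.mulVec g)) : ℂ) = inner ℂ g g := by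
    rw [EuclideanSpace.inner_eq_star_dotProduct, EuclideanSpace.inner_eq_star_dotProduct]
    show dotProduct (M.mulVec g) (star (M.mulVec g)) = dotProduct (WithLp.ofLp g) (star (WithLp.ofLp g))
    rw [dotProduct_comm, dotProduct_comm (WithLp.ofLp g), Matrix.star_mulVec, Matrix.dotProduct_mulVec, Matrix.vecMul_vecMul, hMU,
      Matrix.vecMul_one]
  have h1 := @inner_self_eq_norm_sq ℂ _ _ _ _ (show EuclideanSpace ℂ (Fin 3) from WithLp.toLp 2 (M.mulVec g))
  have h2 := @inner_self_eq_norm_sq ℂ _ _ _ _ g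
  rw [hinner, h2] at h1
  calc ‖(show EuclideanSpace ℂ (Fin 3) from WithLp.toLp 2 (M.mulVec g))‖
      = Real.sqrt (‖(show EuclideanSpace ℂ (Fin 3) from WithLp.toLp 2 (M.mulVec g))‖ ^ 2) :=
        (Real.sqrt_sq (norm_nonneg _)).symm
    _ = Real.sqrt (‖g‖ ^ 2) := by rw [← h1]
    _ = ‖g‖ := Real.sqrt_sq (norm_nonneg _)

/-- The frequency amplitude features of ESTAG are E(3)-invariant:
computing `c_i(k)` from the transformed positions `t ↦ (i ↦ O·x_i(t) + b)` gives the
same value as computing it from `x`, for all `i` and `k`. -/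
theorem amplitude_E3_invariant (T N : ℕ) (hT : 0 < T) (hN : 0 < N)
    (x : Fin T → Fin N → EuclideanSpace ℝ (Fin 3)) (w : Fin N → Fin T → ℝ)
    (O : Matrix (Fin 3) (Fin 3) ℝ) (hO : O ∈ Matrix.orthogonalGroup (Fin 3) ℝ)
    (b : EuclideanSpace ℝ (Fin 3)) :
    ∀ (i : Fin N) (k : Fin T),
      amplitude w (fun t l => e3Act O b (x t l)) i k = amplitude w x i k := by
  intro i k
  unfold amplitude
  rw [edft_e3 hN x O b i k, norm_mulVec_orthogonal O hO]
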